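/- A semi-separate polynomial map f(x,y) = (x, Q(x,y)) from ℂ² to ℂ² is proper if and only if Q(x,y) is monic with respect to y, i.e., Q(x,y) = a·yⁿ + (terms of lower degree in y) with a ∈ ℂ*. -/

import Mathlib

open Polynomial

private lemma ss_eval_eq (Q : Polynomial (Polynomial ℂ)) (x y : ℂ) :
    (Q.map (evalRingHom x)).eval y
      = ∑ i ∈ Finset.range (Q.natDegree+1), (Q.coeff i).eval x * y^i := by
  rw [eval_map, eval₂_eq_sum_range]; rfl

private lemma ss_continuous (Q : Polynomial (Polynomial ℂ)) :
    Continuous fun p : ℂ × ℂ => (Q.map (evalRingHom p.1)).eval p.2 := by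
  have h : ∀ p : ℂ × ℂ, (Q.map (evalRingHom p.1)).eval p.2
      = ∑ i ∈ Finset.range (Q.natDegree+1), (Q.coeff i).eval p.1 * p.2^i :=
    fun p => ss_eval_eq Q p.1 p.2
  simp only [h]
  exact continuous_finset_sum _ fun i _ =>
    ((Q.coeff i).continuous.comp continuous_fst).mul (continuous_snd.pow i)

private lemma ss_poly_bound (p : ℂ[X]) (R : ℝ) (x : ℂ) (hx : ‖x‖ ≤ R) :
    ‖p.eval x‖ ≤ (∑ j ∈ Finset.range (p.natDegree+1), ‖p.coeff j‖) * (1+R)^p.natDegree := by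
  have hR : 0 ≤ R := le_trans (norm_nonneg x) hx
  rw [eval_eq_sum_range]
  refine (norm_sum_le _ _).trans ?_
  rw [Finset.sum_mul]
  refine Finset.sum_le_sum fun j hj => ?_
  rw [norm_mul, norm_pow]
  refine mul_le_mul_of_nonneg_left ?_ (norm_nonneg _)
  calc ‖x‖^j ≤ (1+R)^j := pow_le_pow_left₀ (norm_nonneg _) (hx.trans (by linarith)) j
  _ ≤ (1+R)^p.natDegree := pow_le_pow_right₀ (by linarith)
      (by have := Finset.mem_range.mp hj; omega)

private lemma ss_line_not_compact (s : Set (ℂ × ℂ)) (x0 : ℂ)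
    (h : ∀ t : ℂ, (x0, t) ∈ s) : ¬ IsCompact s := by
  intro hc
  obtain ⟨r, hr⟩ := hc.isBounded.subset_closedBall 0
  have h1 := hr (h ((|r| + 1 : ℝ) : ℂ))
  simp only [Metric.mem_closedBall, dist_zero_right, Prod.norm_def] at h1
  have h2 : ‖((|r| + 1 : ℝ) : ℂ)‖ ≤ r := le_trans (le_max_right _ _) h1
  rw [Complex.norm_real, Real.norm_eq_abs,
    abs_of_nonneg (by positivity : (0:ℝ) ≤ |r| + 1)] at h2
  have := le_abs_self r
  linarith

private lemma ss_prod_norm_le (s : Multiset ℂ) (B : ℝ) (hB : 1 ≤ B)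
    (h : ∀ z ∈ s, ‖z‖ ≤ B) : ‖s.prod‖ ≤ B ^ Multiset.card s := by
  induction s using Multiset.induction_on with
  | empty => simp
  | cons a s ih =>
    rw [Multiset.prod_cons, Multiset.card_cons, norm_mul, pow_succ']
    exact mul_le_mul (h a (Multiset.mem_cons_self a s))
      (ih fun z hz => h z (Multiset.mem_cons_of_mem hz)) (norm_nonneg _) (by linarith)


/-- A semi-separate polynomial map `f(x,y) = (x, Q(x,y))` is proper (preimages of
compact sets are compact) iff `Q` is monic with respect to `y`, i.e.
`Q = a·yⁿ + (lower order in y)` with `a ∈ ℂ*` and `n ≥ 1`.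
Here `Q : (ℂ[x])[y]` and the map evaluates `Q` at the point. -/
theorem stmt_2 (Q : Polynomial (Polynomial ℂ)) :
    (∀ K : Set (ℂ × ℂ), IsCompact K →
        IsCompact ((fun p : ℂ × ℂ =>
          (p.1, (Q.map (Polynomial.evalRingHom p.1)).eval p.2)) ⁻¹' K))
      ↔ (0 < Q.natDegree ∧ ∃ a : ℂ, a ≠ 0 ∧ Q.leadingCoeff = Polynomial.C a) := by
  set n := Q.natDegree with hn
  set f : ℂ × ℂ → ℂ × ℂ :=
    fun p : ℂ × ℂ => (p.1, (Q.map (Polynomial.evalRingHom p.1)).eval p.2) with hf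
  constructor
  · -- forward: proper → monic in y
    intro hproper
    by_contra hnot
    rcases Nat.eq_zero_or_pos n with h0 | hpos
    · -- Q constant in y
      have hQ : Q = C (Q.coeff 0) := Polynomial.eq_C_of_natDegree_eq_zero h0
      refine ss_line_not_compact (f ⁻¹' {(0, (Q.coeff 0).eval 0)}) 0 ?_
        (hproper _ isCompact_singleton)
      intro t
      simp only [Set.mem_preimage, hf, Set.mem_singleton_iff, Prod.mk.injEq]
      refine ⟨trivial, ?_⟩
      conv_lhs => rw [hQ]
      simp
    · -- n ≥ 1
      have hQ0 : Q ≠ 0 := fun h => by rw [hn, h] at hpos; simp at hpos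
      set L : ℂ[X] := Q.leadingCoeff with hL
      have hL0 : L ≠ 0 := Polynomial.leadingCoeff_ne_zero.2 hQ0
      have hLdeg : 0 < L.natDegree := by
        rcases Nat.eq_zero_or_pos L.natDegree with h | h
        · exfalso
          apply hnot
          refine ⟨hpos, L.coeff 0, ?_, Polynomial.eq_C_of_natDegree_eq_zero h⟩
          intro hc
          apply hL0
          rw [Polynomial.eq_C_of_natDegree_eq_zero h, hc, map_zero]
        · exact h
      obtain ⟨x0, hx0⟩ := Complex.exists_root
        (Polynomial.natDegree_pos_iff_degree_pos.1 hLdeg)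
      set p₀ : ℂ[X] := Q.map (evalRingHom x0) with hp₀
      rcases eq_or_ne p₀ 0 with hz | hz
      · refine ss_line_not_compact (f ⁻¹' {(x0, 0)}) x0 ?_ (hproper _ isCompact_singleton)
        intro t
        simp [hf, Set.mem_preimage, ← hp₀, hz]
      · -- hard case
        obtain ⟨T, hT⟩ : ∃ T : ℂ, ¬ p₀.IsRoot T :=
          ((Polynomial.finite_setOf_isRoot hz).infinite_compl).nonempty
        set c : ℝ := ‖p₀.eval T‖ with hc
        have hcpos : 0 < c := norm_pos_iff.2 hT
        have hW := hproper (Metric.closedBall ((x0, 0) : ℂ × ℂ) 1) (isCompact_closedBall _ _)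
        obtain ⟨S', hS'⟩ := hW.isBounded.subset_closedBall 0
        set S : ℝ := max S' 0 with hS
        have hSnn : 0 ≤ S := le_max_right _ _
        have hroot_bound : ∀ x r : ℂ, dist x x0 ≤ 1 →
            (Q.map (evalRingHom x)).eval r = 0 → ‖r‖ ≤ S := by
          intro x r hx hr
          have hmem : (x, r) ∈ f ⁻¹' Metric.closedBall ((x0, 0) : ℂ × ℂ) 1 := by
            simp only [Set.mem_preimage, hf, Metric.mem_closedBall, Prod.dist_eq, hr]
            simp only [max_le_iff, dist_self]
            exact ⟨hx, by norm_num⟩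
          have := hS' hmem
          simp only [Metric.mem_closedBall, dist_zero_right, Prod.norm_def] at this
          exact le_trans (le_trans (le_max_right _ _) this) (le_max_left _ _)
        set B : ℝ := ‖T‖ + S + 1 with hB
        have hB1 : 1 ≤ B := by have := norm_nonneg T; rw [hB]; linarith
        have hBn : (0:ℝ) < B^n := pow_pos (by linarith) n
        set G : ℂ[X] := ∑ i ∈ Finset.range (n+1), Q.coeff i * C (T^i) with hG
        have hGeval : ∀ x : ℂ, G.eval x = (Q.map (evalRingHom x)).eval T := by
          intro x
          rw [ss_eval_eq, hG]
          simp [eval_finset_sum, hn]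
        have hεpos : 0 < c/(2*B^n) := by positivity
        set U : Set ℂ := {x | ‖G.eval x - G.eval x0‖ < c/2} ∩
          ({x | ‖L.eval x‖ < c/(2*B^n)} ∩ Metric.ball x0 1) with hU
        have hUnhds : U ∈ nhds x0 := by
          refine Filter.inter_mem ?_ (Filter.inter_mem ?_ (Metric.ball_mem_nhds x0 one_pos))
          · refine IsOpen.mem_nhds (isOpen_lt (Continuous.norm ?_) continuous_const) ?_
            · exact (Polynomial.continuous G).sub continuous_const
            · simp [hcpos]
          · refine IsOpen.mem_nhds (isOpen_lt (Continuous.norm (Polynomial.continuous L))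
              continuous_const) ?_
            simpa [hx0.eq_zero] using hεpos
        obtain ⟨x, hxU, hxL⟩ := ((infinite_of_mem_nhds x0 hUnhds).diff
          (Polynomial.finite_setOf_isRoot hL0)).nonempty
        have hxne : L.eval x ≠ 0 := hxL
        set p : ℂ[X] := Q.map (evalRingHom x) with hp
        have hpn : p.coeff n = L.eval x := by
          rw [hp, coeff_map, hn, coeff_natDegree]; rfl
        have hpdeg : p.natDegree = n :=
          le_antisymm natDegree_map_le (le_natDegree_of_ne_zero (hpn ▸ hxne))
        have hplc : p.leadingCoeff = L.eval x := by
          rw [leadingCoeff, hpdeg, hpn]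
        have hxball : dist x x0 ≤ 1 := (Metric.mem_ball.1 hxU.2.2).le
        have hrb : ∀ r ∈ p.roots, ‖r‖ ≤ S := by
          intro r hr
          exact hroot_bound x r hxball ((Polynomial.isRoot_of_mem_roots hr))
        have hfac := Polynomial.Splits.eq_prod_roots
          (IsAlgClosed.splits p)
        have h1 : p.eval T = L.eval x * ((p.roots.map fun a => T - a)).prod := by
          conv_lhs => rw [hfac]
          rw [eval_mul, eval_C, hplc, eval_multiset_prod, Multiset.map_map]
          simp
        have hprod : ‖((p.roots.map fun a => T - a)).prod‖ ≤ B^n := by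
          refine le_trans (ss_prod_norm_le _ B hB1 ?_) ?_
          · intro z hz
            obtain ⟨r, hr, rfl⟩ := Multiset.mem_map.1 hz
            calc ‖T - r‖ ≤ ‖T‖ + ‖r‖ := norm_sub_le _ _
            _ ≤ B := by have := hrb r hr; rw [hB]; linarith
          · refine pow_le_pow_right₀ hB1 ?_
            rw [Multiset.card_map]
            exact le_trans (Polynomial.card_roots' p) (le_of_eq hpdeg)
        have hup : ‖p.eval T‖ < c/2 := by
          calc ‖p.eval T‖ = ‖L.eval x‖ * ‖((p.roots.map fun a => T - a)).prod‖ := by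
                rw [h1, norm_mul]
          _ ≤ ‖L.eval x‖ * B^n :=
                mul_le_mul_of_nonneg_left hprod (norm_nonneg _)
          _ < (c/(2*B^n)) * B^n := by
                exact mul_lt_mul_of_pos_right hxU.2.1 hBn
          _ = c/2 := by field_simp
        have hlow : c/2 < ‖p.eval T‖ := by
          have hd : ‖p.eval T - p₀.eval T‖ < c/2 := by
            have := hxU.1
            rwa [Set.mem_setOf_eq, hGeval, hGeval, ← hp, ← hp₀] at this
          have := norm_sub_norm_le (p.eval T) (p₀.eval T)
          have habs : c - ‖p.eval T‖ ≤ ‖p.eval T - p₀.eval T‖ := by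
            have := abs_norm_sub_norm_le (p.eval T) (p₀.eval T)
            rw [abs_le] at this
            linarith [this.1]
          linarith
        linarith
  · -- backward: monic in y → proper
    rintro ⟨hpos, a, ha, hlc⟩ K hK
    obtain ⟨R', hR'⟩ := hK.isBounded.subset_closedBall 0
    set R : ℝ := max R' 0 with hR
    have hRnn : 0 ≤ R := le_max_right _ _
    set M : ℝ := ∑ i ∈ Finset.range n,
      ((∑ j ∈ Finset.range ((Q.coeff i).natDegree+1), ‖(Q.coeff i).coeff j‖)
        * (1+R)^(Q.coeff i).natDegree) with hM
    have hMnn : 0 ≤ M := Finset.sum_nonneg fun i _ => by positivity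
    have hanorm : 0 < ‖a‖ := norm_pos_iff.2 ha
    set S : ℝ := max 1 ((R+M)/‖a‖) with hSdef
    refine IsCompact.of_isClosed_subset
      ((isCompact_closedBall (0:ℂ) R).prod (isCompact_closedBall (0:ℂ) S))
      (IsClosed.preimage (continuous_fst.prodMk (ss_continuous Q)) hK.isClosed) ?_
    rintro ⟨x, y⟩ hmem
    have hK' : f (x, y) ∈ Metric.closedBall (0 : ℂ × ℂ) R :=
      Metric.closedBall_subset_closedBall (le_max_left _ _) (hR' hmem)
    simp only [Metric.mem_closedBall, dist_zero_right, Prod.norm_def, hf, max_le_iff] at hK'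
    obtain ⟨hxR, hvR⟩ := hK'
    have hcoeffn : Q.coeff n = C a := by rw [hn, coeff_natDegree]; exact hlc
    refine Set.mem_prod.2 ⟨by simpa using hxR, ?_⟩
    simp only [Metric.mem_closedBall, dist_zero_right]
    by_contra hy
    push_neg at hy
    have hy1 : 1 < ‖y‖ := lt_of_le_of_lt (le_max_left _ _) hy
    set t : ℝ := ‖y‖ with ht
    have htpow : (1:ℝ) ≤ t^(n-1) := one_le_pow₀ hy1.le
    have hsum : (Q.map (evalRingHom x)).eval y
        = (∑ i ∈ Finset.range n, (Q.coeff i).eval x * y^i) + a * y^n := by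
      rw [ss_eval_eq, Finset.sum_range_succ, hcoeffn, eval_C]
    have hbig : ‖∑ i ∈ Finset.range n, (Q.coeff i).eval x * y^i‖ ≤ M * t^(n-1) := by
      refine le_trans (norm_sum_le _ _) ?_
      rw [hM, Finset.sum_mul]
      refine Finset.sum_le_sum fun i hi => ?_
      rw [norm_mul, norm_pow]
      refine mul_le_mul (ss_poly_bound _ R x hxR) ?_ (pow_nonneg (norm_nonneg y) i)
        (mul_nonneg (Finset.sum_nonneg fun j _ => norm_nonneg _)
          (pow_nonneg (by linarith) _))
      exact pow_le_pow_right₀ hy1.le (by have := Finset.mem_range.mp hi; omega)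
    have hkey : ‖a‖ * t^n ≤ R + M * t^(n-1) := by
      have : a * y^n = (Q.map (evalRingHom x)).eval y
          - ∑ i ∈ Finset.range n, (Q.coeff i).eval x * y^i := by
        rw [hsum]; ring
      calc ‖a‖ * t^n = ‖a * y^n‖ := by rw [norm_mul, norm_pow]
      _ ≤ ‖(Q.map (evalRingHom x)).eval y‖
            + ‖∑ i ∈ Finset.range n, (Q.coeff i).eval x * y^i‖ := by
            rw [this]; exact norm_sub_le _ _
      _ ≤ R + M * t^(n-1) := add_le_add hvR hbig
    have htn : t^n = t * t^(n-1) := by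
      rw [← pow_succ']
      congr 1
      omega
    have hdiv : ‖a‖ * t ≤ R + M := by
      have h2 : ‖a‖ * t * t^(n-1) ≤ (R + M) * t^(n-1) := by
        rw [mul_assoc, ← htn]
        refine hkey.trans ?_
        rw [add_mul]
        refine add_le_add ?_ le_rfl
        nlinarith
      exact le_of_mul_le_mul_right h2 (by linarith)
    have : t ≤ (R+M)/‖a‖ := (le_div_iff₀ hanorm).2 (by linarith [hdiv])
    have : t ≤ S := le_trans this (le_max_right _ _)
    linarith [hy]
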